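/- arXiv:2211.11196 — 2 statements merged into one kernel-verified Lean document; each statement's English description precedes it below -/
import Mathlib

section
/- For 0 < α < 1, λ ∈ ℝ, and σ > 0, the derivative of σ ↦ E_α(λ σ^α) equals λ σ^{α−1} E_{α,α}(λ σ^α). -/
noncomputable def mittagLeffler (α : ℝ) (z : ℂ) : ℂ :=
  ∑' n : ℕ, z ^ n / Complex.Gamma (α * n + 1)

/-- The two-parameter (generalized) Mittag-Leffler function. -/
noncomputable def mittagLeffler2 (α β : ℝ) (z : ℂ) : ℂ :=
  ∑' n : ℕ, z ^ n / Complex.Gamma (α * n + β)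

open Filter Real Set in
/-- Log-convexity lower bound: `Γ(x)·x ≤ Γ(x+α)·(x+α)^(1-α)` for `1 ≤ x`, `0 < α ≤ 1`. -/
lemma gamma_lower (α x : ℝ) (hα : 0 < α) (hα1 : α ≤ 1) (hx : 1 ≤ x) :
    Real.Gamma x * x ≤ Real.Gamma (x + α) * (x + α) ^ (1 - α) := by
  have hx0 : (0:ℝ) < x := lt_of_lt_of_le one_pos hx
  have hxa : (0:ℝ) < x + α := by linarith
  have hxa1 : (0:ℝ) < x + α + 1 := by linarith
  have hΓx : 0 < Real.Gamma x := Real.Gamma_pos_of_pos hx0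
  have hΓa : 0 < Real.Gamma (x + α) := Real.Gamma_pos_of_pos hxa
  have hc := Real.convexOn_log_Gamma.2 (mem_Ioi.2 hxa) (mem_Ioi.2 hxa1)
    hα.le (by linarith : (0:ℝ) ≤ 1 - α) (by ring)
  have hpt : α • (x + α) + (1 - α) • (x + α + 1) = x + 1 := by
    simp only [smul_eq_mul]; ring
  rw [hpt] at hc
  simp only [Function.comp_apply, smul_eq_mul] at hc
  have hadd : Real.Gamma (x + α + 1) = (x + α) * Real.Gamma (x + α) :=
    Real.Gamma_add_one hxa.ne'
  have hadd1 : Real.Gamma (x + 1) = x * Real.Gamma x := Real.Gamma_add_one hx0.ne'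
  rw [hadd1, hadd, Real.log_mul hxa.ne' hΓa.ne'] at hc
  have hc' : Real.log (x * Real.Gamma x)
      ≤ Real.log (Real.Gamma (x + α)) + (1 - α) * Real.log (x + α) := by linarith
  have h1 : Real.Gamma x * x = Real.exp (Real.log (x * Real.Gamma x)) := by
    rw [Real.exp_log (by positivity)]; ring
  have h2 : Real.Gamma (x + α) * (x + α) ^ (1 - α)
      = Real.exp (Real.log (Real.Gamma (x + α)) + (1 - α) * Real.log (x + α)) := by
    rw [Real.exp_add, Real.exp_log hΓa, Real.rpow_def_of_pos hxa]
    ring_nf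
  rw [h1, h2]
  exact Real.exp_le_exp.2 hc'

open Filter Real Set in
lemma summable_pow_div_gamma (α : ℝ) (hα : 0 < α) (hα1 : α ≤ 1) (C : ℝ) (hC : 0 ≤ C) :
    Summable (fun n : ℕ => C ^ n / Real.Gamma (α * n + 1)) := by
  apply summable_of_ratio_norm_eventually_le (r := 1/2) (by norm_num)
  have hT : Tendsto (fun n : ℕ => α * (n:ℝ) + 1) atTop atTop := by
    apply tendsto_atTop_add_const_right
    exact tendsto_natCast_atTop_atTop.const_mul_atTop hα
  have hT2 : Tendsto (fun n : ℕ => (α * (n:ℝ) + 1) ^ α) atTop atTop :=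
    (tendsto_rpow_atTop hα).comp hT
  filter_upwards [hT2.eventually_ge_atTop (4 * C)] with n hn
  set x : ℝ := α * n + 1 with hxdef
  have hx1 : (1:ℝ) ≤ x := by
    have : (0:ℝ) ≤ α * n := by positivity
    simp only [hxdef]; linarith
  have hx0 : (0:ℝ) < x := lt_of_lt_of_le one_pos hx1
  have hxa : (0:ℝ) < x + α := by linarith
  have hΓx : 0 < Real.Gamma x := Real.Gamma_pos_of_pos hx0
  have hΓa : 0 < Real.Gamma (x + α) := Real.Gamma_pos_of_pos hxa
  have harg : α * ((n:ℝ) + 1) + 1 = x + α := by simp only [hxdef]; ring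
  have hG := gamma_lower α x hα hα1 hx1
  have hP : (x + α) ^ (1 - α : ℝ) ≤ 2 * x ^ (1 - α : ℝ) := by
    have h2x : x + α ≤ 2 * x := by linarith
    calc (x + α) ^ (1 - α : ℝ) ≤ (2 * x) ^ (1 - α : ℝ) :=
          Real.rpow_le_rpow hxa.le h2x (by linarith)
      _ = 2 ^ (1 - α : ℝ) * x ^ (1 - α : ℝ) := Real.mul_rpow (by norm_num) hx0.le
      _ ≤ 2 * x ^ (1 - α : ℝ) := by
          have h21 : (2:ℝ) ^ (1 - α : ℝ) ≤ 2 ^ (1:ℝ) :=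
            Real.rpow_le_rpow_of_exponent_le one_le_two (by linarith)
          rw [Real.rpow_one] at h21
          nlinarith [Real.rpow_nonneg hx0.le (1 - α)]
  have hxsplit : x ^ (1 - α : ℝ) * x ^ (α : ℝ) = x := by
    rw [← Real.rpow_add hx0]; simp
  have hxp : (0:ℝ) < x ^ (1 - α : ℝ) := Real.rpow_pos_of_pos hx0 _
  have hxap : (0:ℝ) < x ^ (α : ℝ) := Real.rpow_pos_of_pos hx0 _
  have key : 2 * C * Real.Gamma x ≤ Real.Gamma (x + α) := by
    have h5 : Real.Gamma x * x ≤ Real.Gamma (x + α) * (2 * x ^ (1 - α : ℝ)) :=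
      le_trans hG (by nlinarith)
    have h6 : Real.Gamma x * x ^ (α:ℝ) ≤ 2 * Real.Gamma (x + α) := by
      have h7 : (Real.Gamma x * x ^ (α:ℝ)) * x ^ (1 - α : ℝ)
          ≤ (2 * Real.Gamma (x + α)) * x ^ (1 - α : ℝ) := by
        calc (Real.Gamma x * x ^ (α:ℝ)) * x ^ (1 - α : ℝ)
            = Real.Gamma x * x := by rw [mul_assoc, mul_comm (x ^ (α:ℝ)), hxsplit]
          _ ≤ Real.Gamma (x + α) * (2 * x ^ (1 - α : ℝ)) := h5
          _ = (2 * Real.Gamma (x + α)) * x ^ (1 - α : ℝ) := by ring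
      exact le_of_mul_le_mul_right h7 hxp
    have hn' : 4 * C ≤ x ^ (α:ℝ) := hn
    nlinarith
  have hnorm : ∀ m : ℕ, ‖C ^ m / Real.Gamma (α * m + 1)‖ = C ^ m / Real.Gamma (α * m + 1) := by
    intro m
    rw [Real.norm_eq_abs, abs_of_nonneg]
    have : (0:ℝ) < Real.Gamma (α * m + 1) := Real.Gamma_pos_of_pos (by positivity)
    positivity
  rw [hnorm, hnorm]
  push_cast
  rw [harg]
  rcases hC.eq_or_lt with rfl | hC0
  · simp [zero_pow, Nat.succ_ne_zero]
    positivity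
  · have h8 : C ^ (n+1) / Real.Gamma (x + α) ≤ C ^ (n+1) / (2 * C * Real.Gamma x) := by
      apply div_le_div_of_nonneg_left (by positivity) (by positivity) key
    have h9 : C ^ (n+1) / (2 * C * Real.Gamma x) = 1/2 * (C ^ n / Real.Gamma x) := by
      rw [pow_succ]; field_simp
    calc C ^ (n+1) / Real.Gamma (x + α) ≤ C ^ (n+1) / (2 * C * Real.Gamma x) := h8
      _ = 1/2 * (C ^ n / Real.Gamma x) := h9

theorem mittagLeffler_hasDerivAt (α : ℝ) (hα : 0 < α) (hα1 : α < 1) (lam : ℝ)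
    (σ : ℝ) (hσ : 0 < σ) :
    HasDerivAt (fun s : ℝ => mittagLeffler α ((lam * s ^ α : ℝ) : ℂ))
      (((lam * σ ^ (α - 1) : ℝ) : ℂ) * mittagLeffler2 α α ((lam * σ ^ α : ℝ) : ℂ))
      σ := by
  set g : ℕ → ℝ → ℂ := fun n s => ((lam * s ^ α : ℝ) : ℂ) ^ n / Complex.Gamma (α * n + 1)
    with hg_def
  set g' : ℕ → ℝ → ℂ := fun n x =>
      ((↑n * (lam * x ^ α) ^ (n - 1) * (lam * (α * x ^ (α - 1))) : ℝ) : ℂ)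
        / Complex.Gamma (α * n + 1) with hg'_def
  set C : ℝ := |lam| * (σ + 1) ^ α with hC_def
  have hC : 0 ≤ C := by positivity
  set K : ℝ := |lam| * α * (σ / 2) ^ (α - 1) with hK_def
  have hK : 0 ≤ K := by positivity
  set u : ℕ → ℝ := fun n => (2 * (C + 1)) ^ n / Real.Gamma (α * n + 1) * K with hu_def
  have hGamma_pos : ∀ n : ℕ, 0 < Real.Gamma (α * n + 1) := fun n =>
    Real.Gamma_pos_of_pos (by positivity)
  have hΓcast : ∀ n : ℕ, ((α : ℂ) * n + 1) = ((α * n + 1 : ℝ) : ℂ) := by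
    intro n; push_cast; ring
  have hΓnorm : ∀ n : ℕ, ‖Complex.Gamma ((α : ℂ) * n + 1)‖ = Real.Gamma (α * n + 1) := by
    intro n
    rw [hΓcast n, Complex.Gamma_ofReal, Complex.norm_real, Real.norm_eq_abs,
      abs_of_pos (hGamma_pos n)]
  have hu : Summable u :=
    (summable_pow_div_gamma α hα hα1.le (2 * (C + 1)) (by positivity)).mul_right K
  have ht : IsOpen (Set.Ioo (σ / 2) (σ + 1)) := isOpen_Ioo
  have hσt : σ ∈ Set.Ioo (σ / 2) (σ + 1) := ⟨by linarith, by linarith⟩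
  have hg : ∀ (n : ℕ) (x : ℝ), x ∈ Set.Ioo (σ / 2) (σ + 1) → HasDerivAt (g n) (g' n x) x := by
    intro n x hx
    have hx0 : 0 < x := lt_trans (by linarith) hx.1
    have h1 : HasDerivAt (fun s : ℝ => lam * s ^ α) (lam * (α * x ^ (α - 1))) x :=
      (Real.hasDerivAt_rpow_const (Or.inl hx0.ne')).const_mul lam
    have h3 := h1.pow n
    have h4 := (h3.ofReal_comp).div_const (Complex.Gamma ((α : ℂ) * n + 1))
    simpa only [Pi.pow_apply, Complex.ofReal_pow] using h4
  have hg' : ∀ (n : ℕ) (x : ℝ), x ∈ Set.Ioo (σ / 2) (σ + 1) → ‖g' n x‖ ≤ u n := by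
    intro n x hx
    have hx0 : 0 < x := lt_trans (by linarith) hx.1
    have hzx : |lam * x ^ α| ≤ C := by
      rw [abs_mul, abs_of_nonneg (Real.rpow_nonneg hx0.le α)]
      exact mul_le_mul_of_nonneg_left (Real.rpow_le_rpow hx0.le hx.2.le hα.le) (abs_nonneg lam)
    have hdx : |lam * (α * x ^ (α - 1))| ≤ K := by
      rw [abs_mul, abs_mul, abs_of_pos hα, abs_of_nonneg (Real.rpow_nonneg hx0.le _),
        hK_def, mul_assoc]
      exact mul_le_mul_of_nonneg_left (mul_le_mul_of_nonneg_left
        (Real.rpow_le_rpow_of_nonpos (by linarith) hx.1.le (by linarith)) hα.le)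
        (abs_nonneg lam)
    have hnum : |↑n * (lam * x ^ α) ^ (n - 1) * (lam * (α * x ^ (α - 1)))|
        ≤ (2 * (C + 1)) ^ n * K := by
      rw [abs_mul, abs_mul, abs_pow, Nat.abs_cast]
      have hb : |lam * x ^ α| ^ (n - 1) ≤ (C + 1) ^ n := by
        calc |lam * x ^ α| ^ (n - 1) ≤ (C + 1) ^ (n - 1) :=
              pow_le_pow_left₀ (abs_nonneg _) (by linarith) _
          _ ≤ (C + 1) ^ n := pow_le_pow_right₀ (by linarith) (Nat.sub_le n 1)
      have hn2 : (n : ℝ) ≤ 2 ^ n := by exact_mod_cast (Nat.lt_two_pow_self (n := n)).le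
      calc (n : ℝ) * |lam * x ^ α| ^ (n - 1) * |lam * (α * x ^ (α - 1))|
          ≤ (2 ^ n * (C + 1) ^ n) * K :=
            mul_le_mul (mul_le_mul hn2 hb (by positivity) (by positivity)) hdx
              (abs_nonneg _) (by positivity)
        _ = (2 * (C + 1)) ^ n * K := by rw [mul_pow]
    rw [hg'_def]
    simp only []
    rw [norm_div, hΓnorm n, Complex.norm_real, Real.norm_eq_abs, hu_def]
    simp only []
    rw [div_mul_eq_mul_div, div_le_div_iff_of_pos_right (hGamma_pos n)]
    exact hnum
  have hg0 : Summable (fun n => g n σ) := by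
    apply Summable.of_norm
    have heq : ∀ n : ℕ, ‖g n σ‖ = |lam * σ ^ α| ^ n / Real.Gamma (α * n + 1) := by
      intro n
      rw [hg_def]
      simp only []
      rw [norm_div, hΓnorm n, norm_pow, Complex.norm_real, Real.norm_eq_abs]
    rw [funext heq]
    exact summable_pow_div_gamma α hα hα1.le _ (abs_nonneg _)
  have H : HasDerivAt (fun s : ℝ => ∑' n : ℕ, g n s) (∑' n : ℕ, g' n σ) σ :=
    hasDerivAt_tsum_of_isPreconnected hu ht isPreconnected_Ioo hg hg' hσt hg0 hσt
  have hsum' : Summable (fun n => g' n σ) :=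
    Summable.of_norm_bounded hu (fun n => hg' n σ hσt)
  have hval : ∑' n : ℕ, g' n σ
      = ((lam * σ ^ (α - 1) : ℝ) : ℂ) * mittagLeffler2 α α ((lam * σ ^ α : ℝ) : ℂ) := by
    rw [Summable.tsum_eq_zero_add hsum']
    have h0 : g' 0 σ = 0 := by rw [hg'_def]; simp
    rw [h0, zero_add]
    have hterm : ∀ n : ℕ, g' (n + 1) σ
        = ((lam * σ ^ (α - 1) : ℝ) : ℂ)
          * (((lam * σ ^ α : ℝ) : ℂ) ^ n / Complex.Gamma ((α : ℂ) * n + α)) := by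
      intro n
      rw [hg'_def]
      simp only [Nat.add_sub_cancel]
      have harg : ((α : ℂ) * (↑(n + 1) : ℂ) + 1) = ((α : ℂ) * n + α) + 1 := by
        push_cast; ring
      have hwcast : ((α : ℂ) * n + α) = ((α * n + α : ℝ) : ℂ) := by push_cast; ring
      have hwpos : (0:ℝ) < α * n + α := by positivity
      have hwne : ((α : ℂ) * n + α) ≠ 0 := by
        rw [hwcast]; exact Complex.ofReal_ne_zero.2 hwpos.ne'
      have hΓne : Complex.Gamma ((α : ℂ) * n + α) ≠ 0 := by
        rw [hwcast, Complex.Gamma_ofReal]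
        exact_mod_cast (Real.Gamma_pos_of_pos hwpos).ne'
      rw [harg, Complex.Gamma_add_one _ hwne]
      have hαne : (α : ℂ) ≠ 0 := by exact_mod_cast hα.ne'
      field_simp
      push_cast
      ring
    rw [funext hterm, tsum_mul_left]
    rfl
  have H' : HasDerivAt (fun s : ℝ => mittagLeffler α ((lam * s ^ α : ℝ) : ℂ))
      (∑' n : ℕ, g' n σ) σ := H
  exact hval ▸ H'
end

section
/- The Mittag-Leffler function of order 1/2 fails the semigroup property: there exist λ, t, s > 0 such that E_{1/2}(λ(t+s)^{1/2}) ≠ E_{1/2}(λ t^{1/2})·E_{1/2}(λ s^{1/2}). -/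
open Real

private lemma gamma_three_half : Real.Gamma (3/2) = √π / 2 := by
  rw [show (3:ℝ)/2 = 1/2 + 1 by norm_num, Real.Gamma_add_one (by norm_num),
    Real.Gamma_one_half_eq]
  ring

private lemma gamma_fac (k : ℕ) : √π / 2 * k.factorial ≤ Real.Gamma ((k : ℝ) + 3/2) := by
  induction k with
  | zero => simp [gamma_three_half]
  | succ k ih =>
      have h1 : Real.Gamma (((k : ℕ) + 1 : ℕ) + 3/2) = ((k:ℝ) + 3/2) * Real.Gamma ((k:ℝ) + 3/2) := by
        push_cast
        rw [show (k:ℝ) + 1 + 3/2 = ((k:ℝ) + 3/2) + 1 by ring,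
          Real.Gamma_add_one (by positivity)]
      rw [h1]
      calc √π / 2 * (k+1).factorial = ((k:ℝ)+1) * (√π / 2 * k.factorial) := by
            rw [Nat.factorial_succ]; push_cast; ring
        _ ≤ ((k:ℝ) + 3/2) * Real.Gamma ((k:ℝ) + 3/2) :=
            mul_le_mul (by linarith) ih (by positivity) (by positivity)

private lemma exp_tsum (y : ℝ) : Real.exp y = ∑' n : ℕ, y ^ n / n.factorial := by
  rw [Real.exp_eq_exp_ℝ, NormedSpace.exp_eq_tsum_div]

private lemma summable_even (x : ℝ) : Summable (fun k : ℕ => (x^2) ^ k / k.factorial) :=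
  Real.summable_pow_div_factorial _

private lemma odd_term_le (x : ℝ) (hx : 0 ≤ x) (k : ℕ) :
    x ^ (2*k+1) / Real.Gamma ((k:ℝ) + 3/2) ≤ 2 / √π * x * ((x^2) ^ k / k.factorial) := by
  have hπ : (0:ℝ) < √π := Real.sqrt_pos.2 Real.pi_pos
  have h1 : x ^ (2*k+1) / Real.Gamma ((k:ℝ) + 3/2) ≤ x ^ (2*k+1) / (√π / 2 * k.factorial) := by
    apply div_le_div_of_nonneg_left (by positivity) (by positivity) (gamma_fac k)
  refine h1.trans_eq ?_
  have hf : (0:ℝ) < k.factorial := by exact_mod_cast k.factorial_pos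
  rw [pow_add, pow_mul, pow_one]
  field_simp

private lemma summable_odd (x : ℝ) (hx : 0 ≤ x) :
    Summable (fun k : ℕ => x ^ (2*k+1) / Real.Gamma ((k:ℝ) + 3/2)) := by
  apply Summable.of_nonneg_of_le (fun k => by positivity) (odd_term_le x hx)
  exact (summable_even x).mul_left _
set_option maxHeartbeats 2000000 in
private lemma ml_eq (x : ℝ) (hx : 0 ≤ x) :
    mittagLeffler (1/2) (x:ℂ) =
      ((Real.exp (x^2) + ∑' k : ℕ, x ^ (2*k+1) / Real.Gamma ((k:ℝ) + 3/2) : ℝ) : ℂ) := by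
  have hterm : ∀ n : ℕ, (x:ℂ) ^ n / Complex.Gamma (((1:ℝ)/2 : ℝ) * n + 1)
      = ((x ^ n / Real.Gamma ((n:ℝ) / 2 + 1) : ℝ) : ℂ) := by
    intro n
    have h : (((1:ℝ)/2 : ℝ) : ℂ) * n + 1 = (((n:ℝ) / 2 + 1 : ℝ) : ℂ) := by push_cast; ring
    rw [h, Complex.Gamma_ofReal, ← Complex.ofReal_pow, ← Complex.ofReal_div]
  have even_eq : ∀ k : ℕ, x ^ (2*k) / Real.Gamma (((2*k : ℕ):ℝ) / 2 + 1) = (x^2) ^ k / k.factorial := by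
    intro k
    have h : ((2*k : ℕ):ℝ) / 2 + 1 = (k:ℝ) + 1 := by push_cast; ring
    rw [h, Real.Gamma_nat_eq_factorial, pow_mul]
  have odd_eq : ∀ k : ℕ, x ^ (2*k+1) / Real.Gamma (((2*k+1 : ℕ):ℝ) / 2 + 1)
      = x ^ (2*k+1) / Real.Gamma ((k:ℝ) + 3/2) := by
    intro k
    have h : ((2*k+1 : ℕ):ℝ) / 2 + 1 = (k:ℝ) + 3/2 := by push_cast; ring
    rw [h]
  have hse : Summable (fun k : ℕ => x ^ (2*k) / Real.Gamma (((2*k : ℕ):ℝ) / 2 + 1)) := by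
    simp only [even_eq]; exact summable_even x
  have hso : Summable (fun k : ℕ => x ^ (2*k+1) / Real.Gamma (((2*k+1 : ℕ):ℝ) / 2 + 1)) := by
    simp only [odd_eq]; exact summable_odd x hx
  rw [mittagLeffler]
  rw [tsum_congr hterm, ← Complex.ofReal_tsum]
  congr 1
  rw [← tsum_even_add_odd hse hso, tsum_congr even_eq, tsum_congr odd_eq, ← exp_tsum]
set_option maxHeartbeats 2000000 in
theorem mittagLeffler_half_not_semigroup :
    ∃ lam t s : ℝ, 0 < lam ∧ 0 < t ∧ 0 < s ∧
      mittagLeffler (1/2) ((lam * (t + s) ^ ((1 : ℝ)/2) : ℝ) : ℂ) ≠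
        mittagLeffler (1/2) ((lam * t ^ ((1 : ℝ)/2) : ℝ) : ℂ) *
          mittagLeffler (1/2) ((lam * s ^ ((1 : ℝ)/2) : ℝ) : ℂ) := by
  refine ⟨1/4, 1, 1, by norm_num, one_pos, one_pos, ?_⟩
  have hπ : (0:ℝ) < √π := Real.sqrt_pos.2 Real.pi_pos
  have ha' : (1/4 : ℝ) * ((1:ℝ) + 1) ^ ((1:ℝ)/2) = √2 / 4 := by
    rw [show (1:ℝ) + 1 = 2 by norm_num, ← Real.sqrt_eq_rpow]; ring
  have hb' : (1/4 : ℝ) * (1:ℝ) ^ ((1:ℝ)/2) = 1/4 := by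
    rw [Real.one_rpow]; ring
  rw [ha', hb', ml_eq _ (by positivity), ml_eq _ (by norm_num), ← Complex.ofReal_mul]
  set a : ℝ := √2 / 4 with hadef
  set b : ℝ := (1/4 : ℝ) with hbdef
  set Ba : ℝ := ∑' k : ℕ, a ^ (2*k+1) / Real.Gamma ((k:ℝ) + 3/2) with hBa
  set Bb : ℝ := ∑' k : ℕ, b ^ (2*k+1) / Real.Gamma ((k:ℝ) + 3/2) with hBb
  have ha0 : (0:ℝ) ≤ a := by positivity
  have hb0 : (0:ℝ) ≤ b := by norm_num
  have ha2 : a ^ 2 = 1/8 := by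
    rw [hadef, div_pow, sq_sqrt (by norm_num : (0:ℝ) ≤ 2)]; norm_num
  have hb2 : b ^ 2 = 1/16 := by norm_num
  have hBa_le : Ba ≤ 2 / √π * a * Real.exp (a^2) := by
    have := Summable.tsum_le_tsum (odd_term_le a ha0) (summable_odd a ha0)
      ((summable_even a).mul_left (2 / √π * a))
    rwa [tsum_mul_left, ← exp_tsum] at this
  have hBb_ge : 1 / (2 * √π) ≤ Bb := by
    have h0 : b ^ (2*0+1) / Real.Gamma (((0:ℕ):ℝ) + 3/2) ≤ Bb :=
      Summable.le_tsum (summable_odd b hb0) 0 (fun i _ => by positivity)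
    have heq : b ^ (2*0+1) / Real.Gamma (((0:ℕ):ℝ) + 3/2) = 1 / (2 * √π) := by
      have : (((0:ℕ):ℝ) + 3/2) = (3/2 : ℝ) := by norm_num
      rw [this, gamma_three_half, hbdef]
      field_simp
      ring
    linarith [heq ▸ h0]
  have hBb0 : (0:ℝ) ≤ Bb := le_trans (by positivity) hBb_ge
  have hexp4 : Real.exp (1/4) < 2 := by
    have h4 : Real.exp (1/4) ^ 4 = Real.exp 1 := by
      rw [← Real.exp_nat_mul]; norm_num
    have h5 : Real.exp (1/4) ^ 4 < 2 ^ 4 := by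
      rw [h4]; linarith [Real.exp_one_lt_d9]
    exact lt_of_pow_lt_pow_left₀ 4 (by norm_num) h5
  have hexp8 : Real.exp (1/8) < √2 := by
    have h2 : Real.exp (1/8) ^ 2 = Real.exp (1/4) := by
      rw [← Real.exp_nat_mul]; norm_num
    have h3 : Real.exp (1/8) ^ 2 < (√2) ^ 2 := by
      rw [h2, sq_sqrt (by norm_num : (0:ℝ) ≤ 2)]; exact hexp4
    exact lt_of_pow_lt_pow_left₀ 2 (Real.sqrt_nonneg 2) h3
  have hE16 : (1:ℝ) ≤ Real.exp (1/16) := Real.one_le_exp (by norm_num)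
  have hE16sq : Real.exp (1/16) ^ 2 = Real.exp (1/8) := by
    rw [← Real.exp_nat_mul]; norm_num
  have hreal : Real.exp (a^2) + Ba < (Real.exp (b^2) + Bb) * (Real.exp (b^2) + Bb) := by
    rw [ha2] at hBa_le
    rw [ha2, hb2]
    have hs2 : (0:ℝ) < √2 := by positivity
    have hE8pos : (0:ℝ) < Real.exp (1/8) := Real.exp_pos _
    have h2 : √2 * Real.exp (1/8) < 2 := by
      calc √2 * Real.exp (1/8) < √2 * √2 := by
            exact mul_lt_mul_of_pos_left hexp8 hs2
        _ = 2 := Real.mul_self_sqrt (by norm_num)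
    have hBa_lt : Ba < 1 / √π := by
      refine hBa_le.trans_lt ?_
      have heq1 : 2 / √π * a * Real.exp (1/8) = (√2 * Real.exp (1/8)) / (2 * √π) := by
        rw [hadef]; field_simp; ring
      have heq2 : (1:ℝ) / √π = 2 / (2 * √π) := by field_simp
      rw [heq1, heq2]
      exact (div_lt_div_iff_of_pos_right (by positivity)).2 h2
    have h1 : Bb ≤ Real.exp (1/16) * Bb := le_mul_of_one_le_left hBb0 hE16
    have hdiv : (1:ℝ)/√π = 2 * (1/(2*√π)) := by field_simp
    nlinarith [hBa_lt, hBb_ge, sq_nonneg Bb, hE16sq, h1, hdiv]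
  have hne : Real.exp (a^2) + Ba ≠ (Real.exp (b^2) + Bb) * (Real.exp (b^2) + Bb) :=
    ne_of_lt hreal
  exact_mod_cast fun h => hne (Complex.ofReal_inj.mp h)
end
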